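/- Let ν ≥ 1 be an integer and let m̂ ∈ ℝ with m̂ ≠ 0. Define the linear map T : ℝ^{2ν} → ℝ^{2ν} on coordinates (a_1, b_1, a_2, b_2, …, a_ν, b_ν) by: the first ν+1 output coordinates are m̂·a_1, m̂·(a_2 − b_1), m̂·(a_3 − b_2), …, m̂·(a_ν − b_{ν−1}), −m̂·b_ν, and the remaining ν−1 output coordinates are b_1 + a_2, b_2 + a_3, …, b_{ν−1} + a_ν. Then T is bijective; equivalently, the associated 2ν × 2ν matrix C is invertible, so for every right-hand side z ∈ ℝ^{2ν} the linear system Cx = z has a unique solution. -/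
import Mathlib


/-- Invertibility of the linear system in the "plugs" stage of the algorithm: for
`ν ≥ 1` and `m̂ ≠ 0`, the linear map sending `(a₁,b₁,…,a_ν,b_ν)` to the `ν+1` slope
quantities `m̂a₁, m̂(a₂-b₁), …, m̂(a_ν-b_{ν-1}), -m̂b_ν` together with the `ν-1`
symmetry quantities `b₁+a₂, …, b_{ν-1}+a_ν` is bijective, so the associated
`2ν × 2ν` system has a unique solution for every right-hand side. -/
theorem plug_system_invertible (ν : ℕ) (hν : 1 ≤ ν) (mhat : ℝ) (hm : mhat ≠ 0) :
    Function.Bijective (fun ab : (Fin ν → ℝ) × (Fin ν → ℝ) =>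
      ((mhat * ab.1 ⟨0, hν⟩,
        fun i : Fin (ν - 1) =>
          mhat * (ab.1 ⟨i.val + 1, by have := i.isLt; omega⟩ -
            ab.2 ⟨i.val, by have := i.isLt; omega⟩),
        -mhat * ab.2 ⟨ν - 1, by omega⟩,
        fun i : Fin (ν - 1) =>
          ab.2 ⟨i.val, by have := i.isLt; omega⟩ +
            ab.1 ⟨i.val + 1, by have := i.isLt; omega⟩) :
        ℝ × (Fin (ν - 1) → ℝ) × ℝ × (Fin (ν - 1) → ℝ))) := by
  rw [Function.bijective_iff_has_inverse]
  refine ⟨fun z => (fun i : Fin ν =>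
      if h : i.val = 0 then z.1 / mhat
      else (z.2.2.2 ⟨i.val - 1, by have := i.isLt; omega⟩ +
            z.2.1 ⟨i.val - 1, by have := i.isLt; omega⟩ / mhat) / 2,
    fun i : Fin ν =>
      if h : i.val = ν - 1 then -(z.2.2.1 / mhat)
      else (z.2.2.2 ⟨i.val, by have := i.isLt; omega⟩ -
            z.2.1 ⟨i.val, by have := i.isLt; omega⟩ / mhat) / 2), ?_, ?_⟩
  · rintro ⟨a, b⟩
    dsimp only
    refine Prod.ext (funext fun i => ?_) (funext fun i => ?_) <;> dsimp only
    · by_cases h : i.val = 0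
      · rw [dif_pos h]
        rw [mul_div_cancel_left₀ _ hm]
        congr 1
        exact Fin.ext h.symm
      · rw [dif_neg h]
        have h1 : (i.val - 1) + 1 = i.val := by omega
        have e1 : a ⟨(i.val - 1) + 1, by have := i.isLt; omega⟩ = a i := by
          congr 1; exact Fin.ext h1
        rw [e1, mul_div_cancel_left₀ _ hm]
        ring
    · by_cases h : i.val = ν - 1
      · rw [dif_pos h]
        have e1 : b ⟨ν - 1, by omega⟩ = b i := by congr 1; exact Fin.ext h.symm
        rw [← e1]
        field_simp
      · rw [dif_neg h]
        have e1 : a ⟨i.val + 1, by have := i.isLt; omega⟩ =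
            a ⟨i.val + 1, by have := i.isLt; omega⟩ := rfl
        rw [mul_div_cancel_left₀ _ hm]
        have e2 : b ⟨(i : Fin ν).val, by have := i.isLt; omega⟩ = b i := by
          congr 1
        ring
  · rintro ⟨s0, s, sν, t⟩
    dsimp only
    refine Prod.ext ?_ (Prod.ext (funext fun i => ?_) (Prod.ext ?_ (funext fun i => ?_))) <;> dsimp only
    · rw [dif_pos rfl, mul_div_cancel₀ _ hm]
    · have h1 : (i.val + 1 : ℕ) ≠ 0 := by omega
      rw [dif_neg h1]
      have h2 : ¬ (i.val = ν - 1) := by have := i.isLt; omega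
      rw [dif_neg h2]
      have e1 : (⟨i.val + 1 - 1, by have := i.isLt; omega⟩ : Fin (ν - 1)) = i := rfl
      rw [e1]
      have e2 : (⟨(i : Fin (ν-1)).val, by have := i.isLt; omega⟩ : Fin (ν - 1)) = i := by
        exact Fin.ext rfl
      field_simp
      ring
    · rw [dif_pos rfl]
      field_simp
    · have h1 : (i.val + 1 : ℕ) ≠ 0 := by omega
      have h2 : ¬ (i.val = ν - 1) := by have := i.isLt; omega
      rw [dif_neg h2, dif_neg h1]
      have e1 : (⟨i.val + 1 - 1, by have := i.isLt; omega⟩ : Fin (ν - 1)) = i := rfl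
      rw [e1]
      ring
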